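/- A language model M is E-regular (its congruence quotient Σ*/≡^M_E is finite) if and only if it is PDFA E-recognizable (there exists a PDFA A with M(u) =_E M_A(u) for all u ∈ Σ*). -/
import Mathlib


/-- A probability distribution over `Option α` (the alphabet `α` extended with
the terminal symbol `$`, modeled as `none`). -/
def PDist (α : Type*) [Fintype α] : Type _ :=
  {f : Option α → ℝ // (∀ x, 0 ≤ f x) ∧ ∑ x, f x = 1}

/-- A probabilistic deterministic finite automaton with state space `Q`. -/
structure PDFA (Q : Type*) (α : Type*) [Fintype α] where
  init : Q
  out : Q → PDist α
  next : Q → α → Q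

variable {Q α : Type*} [Fintype α]

/-- Extension of the transition function to strings. -/
def PDFA.run (A : PDFA Q α) (q : Q) (u : List α) : Q := u.foldl A.next q

/-- The language model defined by a PDFA. -/
def PDFA.lm (A : PDFA Q α) (u : List α) : PDist α := A.out (A.run A.init u)

/-- The tolerance/congruence induced on strings by a language model `M` and a
relation `S` on distributions. -/
def strTol (M : List α → PDist α) (S : PDist α → PDist α → Prop) (u u' : List α) : Prop :=
  ∀ w : List α, S (M (u ++ w)) (M (u' ++ w))

/-- The tolerance/congruence induced on states of a PDFA. -/
def stateTol (A : PDFA Q α) (S : PDist α → PDist α → Prop) (q q' : Q) : Prop :=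
  ∀ w : List α, S (A.out (A.run q w)) (A.out (A.run q' w))

lemma strTol_equiv {α : Type} [Fintype α] (M : List α → PDist α)
    (E : PDist α → PDist α → Prop) (hE : Equivalence E) :
    Equivalence (strTol M E) :=
  ⟨fun _ _ => hE.refl _, fun h w => hE.symm (h w), fun h h' w => hE.trans (h w) (h' w)⟩

lemma PDFA.run_append {Q α : Type*} [Fintype α] (A : PDFA Q α) (q : Q) (u v : List α) :
    A.run q (u ++ v) = A.run (A.run q u) v := by
  simp [PDFA.run, List.foldl_append]

/-- Thm. 25 (paper): a language model `M` is `E`-regular (its congruence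
quotient is finite) iff it is PDFA `E`-recognizable (some PDFA is pointwise
`E`-equivalent to it). -/
theorem regular_iff_recognizable {α : Type} [Fintype α]
    (M : List α → PDist α) (E : PDist α → PDist α → Prop) (hE : Equivalence E) :
    Finite (Quot (strTol M E)) ↔
      ∃ (Q : Type) (_ : Fintype Q) (A : PDFA Q α), ∀ u, E (M u) (A.lm u) := by
  classical
  have hsEq := strTol_equiv M E hE
  constructor
  · intro hfin
    set Qt := Quot (strTol M E) with hQt
    refine ⟨Qt, Fintype.ofFinite Qt, ?_, ?_⟩
    · exact
      { init := Quot.mk _ []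
        out := fun q => M q.out
        next := fun q a =>
          Quot.lift (fun u => Quot.mk (strTol M E) (u ++ [a]))
            (fun u u' h => Quot.sound (fun w => by
              simpa [List.append_assoc] using h ([a] ++ w))) q }
    · intro u
      set A : PDFA Qt α :=
      { init := Quot.mk _ []
        out := fun q => M q.out
        next := fun q a =>
          Quot.lift (fun u => Quot.mk (strTol M E) (u ++ [a]))
            (fun u u' h => Quot.sound (fun w => by
              simpa [List.append_assoc] using h ([a] ++ w))) q } with hA
      have hrun : ∀ (w v : List α), A.run (Quot.mk _ v) w = Quot.mk _ (v ++ w) := by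
        intro w
        induction w with
        | nil => intro v; simp [PDFA.run]
        | cons a w ih =>
          intro v
          have : A.run (Quot.mk _ v) (a :: w) = A.run (Quot.mk _ (v ++ [a])) w := rfl
          rw [this, ih]
          simp
      have hlm : A.lm u = M (Quot.out (Quot.mk (strTol M E) u)) := by
        have h0 := hrun u []
        simp only [List.nil_append] at h0
        show M (Quot.out (A.run (Quot.mk (strTol M E) []) u)) = _
        rw [h0]
      have hex : strTol M E (Quot.out (Quot.mk (strTol M E) u)) u := by
        have := Quot.eqvGen_exact (Quot.out_eq (Quot.mk (strTol M E) u))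
        exact (hsEq.eqvGen_iff).mp this
      have := hex []
      simp at this
      rw [hlm]
      exact hE.symm this
  · rintro ⟨Qs, hQs, A, hAM⟩
    let g : List α → Qs := fun u => A.run A.init u
    have key : ∀ u u', g u = g u' → strTol M E u u' := by
      intro u u' h w
      have h1 : E (M (u ++ w)) (A.lm (u ++ w)) := hAM _
      have h2 : E (M (u' ++ w)) (A.lm (u' ++ w)) := hAM _
      have : A.lm (u ++ w) = A.lm (u' ++ w) := by
        simp only [PDFA.lm, PDFA.run_append]
        show A.out (A.run (g u) w) = A.out (A.run (g u') w)
        rw [h]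
      exact hE.trans h1 (this ▸ hE.symm h2)
    have : Finite Qs := Finite.of_fintype Qs
    refine Finite.of_surjective (α := Qs)
      (fun q => if h : ∃ u, g u = q then Quot.mk _ h.choose else Quot.mk _ []) ?_
    intro x
    induction x using Quot.ind with
    | _ u =>
      refine ⟨g u, ?_⟩
      have h : ∃ v, g v = g u := ⟨u, rfl⟩
      simp only [dif_pos h]
      exact Quot.sound (key _ _ h.choose_spec)
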